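/- For all integers a ≥ 1, b ≥ 1 and L ≥ 0 with L ≡ a − b (mod 2), the generating function of unrestricted lattice paths satisfies G_L(∅) := Σ_{(σ_0,…,σ_{L+1})} q^{Σ_{k=1}^{L} k|σ_{k+1} − σ_{k−1}|/4} = q^{(a−b)(a−b−1)/4} [ L ; (1/2)(L + a − b) ], where the sum is over all sequences of integers (σ_0,…,σ_{L+1}) (no upper or lower bound on the σ_j) with |σ_{j+1} − σ_j| = 1 for j = 0,…,L, σ_0 = a−1, σ_L = b−1 and σ_{L+1} = b. -/

import Mathlib

attribute [local instance] Classical.propDecidable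

noncomputable section

variable {K : Type*} [Field K]

/-- `(q)_n` where `q = t^4` (the variable `t` stands for `q^{1/4}`). -/
def qp (t : K) (n : ℕ) : K :=
  ∏ k ∈ Finset.range n, (1 - t ^ (4 * (k + 1)))

/-- Gaussian polynomial `[N; m]` in the variable `q = t^4`. -/
def gauss (t : K) (N m : ℤ) : K :=
  if 0 ≤ m ∧ m ≤ N then qp t N.toNat / (qp t m.toNat * qp t (N - m).toNat) else 0

/-- Gaussian polynomial `[N2/2; m]` (zero if `N2` is odd). -/
def gaussHalf (t : K) (N2 m : ℤ) : K :=
  if N2 % 2 = 0 then gauss t (N2 / 2) m else 0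

/-- Incidence matrix of the Dynkin diagram `A_d` (indices `i : Fin d` stand for `i+1`). -/
def inc (d : ℕ) (i k : Fin d) : ℤ := if (i : ℕ) + 1 = (k : ℕ) ∨ (k : ℕ) + 1 = (i : ℕ) then 1 else 0

/-- Cartan matrix of `A_d`. -/
def cartan (d : ℕ) (i k : Fin d) : ℤ := (if i = k then 2 else 0) - inc d i k

/-- the `s`-th unit vector, with the convention `e_0 = e_{d+1} = 0`. -/
def uv (d : ℕ) (s : ℤ) (i : Fin d) : ℤ := if ((i : ℕ) : ℤ) + 1 = s then 1 else 0

/-- `m_s`, with the conventions `m_0 = m_{d+1} = 0`. -/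
def mAt (d : ℕ) (m : Fin d → ℕ) (s : ℤ) : ℤ := ∑ i, uv d s i * (m i : ℤ)

/-- `mᵀ C m` for the `A_d` Cartan matrix. -/
def quadC (d : ℕ) (m : Fin d → ℕ) : ℤ := ∑ i, ∑ k, (m i : ℤ) * cartan d i k * (m k : ℤ)

/-- the vector `Q_{a,b}`. -/
def Qab (r a b : ℕ) (i : Fin (r - 3)) : ℕ :=
  min (a - 1) (r - ((i : ℕ) + 1) - 2) + min (b - 1) (r - ((i : ℕ) + 1) - 2)

/-- the parity restriction `m ≡ Q_{a,b} (mod 2)`. -/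
def parity (r a b : ℕ) (m : Fin (r - 3) → ℕ) : Prop := ∀ i, m i % 2 = Qab r a b i % 2

/-- `(I m + L e_1 + e_{r-a-1} + e_{r-b-1})_i`. -/
def topE (r a b L : ℕ) (m : Fin (r - 3) → ℕ) (i : Fin (r - 3)) : ℤ :=
  (∑ k, inc (r - 3) i k * (m k : ℤ)) + (L : ℤ) * uv (r - 3) 1 i
    + uv (r - 3) ((r : ℤ) - a - 1) i + uv (r - 3) ((r : ℤ) - b - 1) i

/-- the summand `q^{(1/4) mᵀCm - (1/2) m_{r-a-1}} ∏_j [(1/2)(Im + Le_1 + e_{r-a-1} + e_{r-b-1})_j; m_j]`,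
in the variable `t = q^{1/4}`. -/
def fermTerm (r a b L : ℕ) (t : K) (m : Fin (r - 3) → ℕ) : K :=
  t ^ (quadC (r - 3) m - 2 * mAt (r - 3) m ((r : ℤ) - a - 1))
    * ∏ i, gaussHalf t (topE r a b L m i) (m i)

/-- the fermionic sum `Σ_{m ≡ Q_{a,b}} (⋯)`. -/
def fermSum (r a b L : ℕ) (t : K) : K :=
  ∑ᶠ m : Fin (r - 3) → ℕ, if parity r a b m then fermTerm r a b L t m else 0

section UPaths
open Finset

local notation "XR" => (RatFunc.X : RatFunc ℚ)

lemma XR_ne_zero : XR ≠ 0 := RatFunc.X_ne_zero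

lemma one_sub_XR_pow_ne {m : ℕ} (hm : m ≠ 0) : (1 : RatFunc ℚ) - XR ^ m ≠ 0 := by
  intro h
  have hx : (XR : RatFunc ℚ) ^ m = 1 := by
    have := sub_eq_zero.mp h; exact this.symm
  have h2 : (Polynomial.X : Polynomial ℚ) ^ m = 1 := by
    apply RatFunc.algebraMap_injective ℚ
    rw [map_pow, map_one, RatFunc.algebraMap_X, hx]
  have := congrArg Polynomial.natDegree h2
  rw [Polynomial.natDegree_X_pow, Polynomial.natDegree_one] at this
  exact hm this

lemma qp_XR_ne (n : ℕ) : qp XR n ≠ 0 := by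
  rw [qp]
  rw [Finset.prod_ne_zero_iff]
  intro k _
  exact one_sub_XR_pow_ne (by omega)

lemma qp_zero : qp XR 0 = 1 := by simp [qp]

lemma qp_succ (n : ℕ) : qp XR (n + 1) = qp XR n * (1 - XR ^ (4 * (n + 1))) := by
  rw [qp, qp, Finset.prod_range_succ]

lemma gauss_nat (n j : ℕ) (h : j ≤ n) :
    gauss XR (n : ℤ) (j : ℤ) = qp XR n / (qp XR j * qp XR (n - j)) := by
  rw [gauss, if_pos ⟨Int.ofNat_nonneg j, by exact_mod_cast h⟩]
  have e1 : ((n : ℤ)).toNat = n := by omega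
  have e2 : ((j : ℤ)).toNat = j := by omega
  have e3 : ((n : ℤ) - (j : ℤ)).toNat = n - j := by omega
  rw [e1, e2, e3]

lemma gauss_neg' {N m : ℤ} (h : ¬(0 ≤ m ∧ m ≤ N)) : gauss XR N m = 0 := if_neg h

lemma gauss_symm (N k : ℤ) : gauss XR N k = gauss XR N (N - k) := by
  rw [gauss, gauss]
  by_cases h : 0 ≤ k ∧ k ≤ N
  · rw [if_pos h, if_pos (by omega)]
    rw [show N - (N - k) = k by ring, mul_comm]
  · rw [if_neg h, if_neg (by omega)]

lemma pascal_nat (i c : ℕ) :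
    qp XR (i + c + 2) / (qp XR (i + 1) * qp XR (c + 1))
      = XR ^ (4 * (i + 1)) * (qp XR (i + c + 1) / (qp XR (i + 1) * qp XR c))
        + qp XR (i + c + 1) / (qp XR i * qp XR (c + 1)) := by
  have h1 : qp XR (i + c + 2) = qp XR (i + c + 1) * (1 - XR ^ (4 * (i + c + 2))) := by
    rw [← qp_succ]
  have h2 : qp XR (i + 1) = qp XR i * (1 - XR ^ (4 * (i + 1))) := qp_succ i
  have h3 : qp XR (c + 1) = qp XR c * (1 - XR ^ (4 * (c + 1))) := qp_succ c
  rw [h1, h2, h3]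
  have ne1 := qp_XR_ne i
  have ne2 := qp_XR_ne c
  have ne3 := qp_XR_ne (i + c + 1)
  have ne4 : (1 : RatFunc ℚ) - XR ^ (4 * (i + 1)) ≠ 0 := one_sub_XR_pow_ne (by omega)
  have ne5 : (1 : RatFunc ℚ) - XR ^ (4 * (c + 1)) ≠ 0 := one_sub_XR_pow_ne (by omega)
  field_simp
  ring

lemma gauss_pascal (N : ℕ) (m : ℤ) :
    gauss XR ((N : ℤ) + 1) m
      = XR ^ (4 * m) * gauss XR (N : ℤ) m + gauss XR (N : ℤ) (m - 1) := by
  by_cases h0 : m < 0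
  · rw [gauss_neg' (by omega), gauss_neg' (by omega), gauss_neg' (by omega)]
    simp
  by_cases h1 : (N : ℤ) + 1 < m
  · rw [gauss_neg' (by omega), gauss_neg' (by omega), gauss_neg' (by omega)]
    simp
  obtain ⟨j, rfl⟩ : ∃ j : ℕ, m = (j : ℤ) := ⟨m.toNat, by omega⟩
  have hjN1 : j ≤ N + 1 := by omega
  rcases Nat.eq_zero_or_pos j with hj | hj
  · subst hj
    rw [show ((N : ℤ) + 1) = ((N + 1 : ℕ) : ℤ) by push_cast; ring]
    rw [show ((0 : ℕ) : ℤ) = ((0 : ℕ) : ℤ) from rfl]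
    rw [gauss_nat (N + 1) 0 (by omega), gauss_nat N 0 (by omega)]
    rw [gauss_neg' (by omega)]
    rw [qp_zero, Nat.sub_zero, Nat.sub_zero, one_mul, one_mul]
    rw [div_self (qp_XR_ne (N + 1)), div_self (qp_XR_ne N)]
    simp
  rcases Nat.lt_or_ge j (N + 1) with hjN | hjN
  · -- 1 ≤ j ≤ N : main case
    have hjle : j ≤ N := by omega
    obtain ⟨i, rfl⟩ : ∃ i, j = i + 1 := ⟨j - 1, by omega⟩
    obtain ⟨c, hc⟩ : ∃ c, N = i + 1 + c := ⟨N - (i + 1), by omega⟩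
    subst hc
    rw [show ((i + 1 + c : ℕ) : ℤ) + 1 = ((i + c + 2 : ℕ) : ℤ) by push_cast; ring]
    rw [gauss_nat (i + c + 2) (i + 1) (by omega)]
    rw [show ((i + 1 + c : ℕ) : ℤ) = ((i + c + 1 : ℕ) : ℤ) by push_cast; ring]
    rw [gauss_nat (i + c + 1) (i + 1) (by omega)]
    rw [show ((i + 1 : ℕ) : ℤ) - 1 = ((i : ℕ) : ℤ) by push_cast; ring]
    rw [gauss_nat (i + c + 1) i (by omega)]
    rw [show i + c + 2 - (i + 1) = c + 1 by omega, show i + c + 1 - (i + 1) = c by omega,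
      show i + c + 1 - i = c + 1 by omega]
    rw [show (4 : ℤ) * ((i + 1 : ℕ) : ℤ) = ((4 * (i + 1) : ℕ) : ℤ) by push_cast; ring,
      zpow_natCast]
    exact pascal_nat i c
  · -- j = N + 1
    have hj1 : j = N + 1 := by omega
    subst hj1
    rw [show ((N : ℤ) + 1) = ((N + 1 : ℕ) : ℤ) by push_cast; ring]
    rw [gauss_nat (N + 1) (N + 1) le_rfl]
    rw [gauss_neg' (by push_cast; omega)]
    rw [show ((N + 1 : ℕ) : ℤ) - 1 = ((N : ℕ) : ℤ) by push_cast; ring]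
    rw [gauss_nat N N le_rfl]
    rw [Nat.sub_self, Nat.sub_self, qp_zero, mul_one, mul_one,
      div_self (qp_XR_ne (N + 1)), div_self (qp_XR_ne N)]
    simp

def stp (b : Bool) : ℤ := if b then 1 else -1

lemma abs_stp (b : Bool) : |stp b| = 1 := by cases b <;> simp [stp]

def walk (A : ℤ) (ε : ℕ → Bool) : ℕ → ℤ
  | 0 => A
  | j + 1 => walk A ε j + stp (ε j)

def exb {n : ℕ} (ε : Fin n → Bool) (j : ℕ) : Bool :=
  if h : j < n then ε ⟨j, h⟩ else false

lemma walk_congr (A : ℤ) {ε ε' : ℕ → Bool} :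
    ∀ j : ℕ, (∀ i, i < j → ε i = ε' i) → walk A ε j = walk A ε' j
  | 0, _ => rfl
  | j + 1, h => by
      rw [walk, walk, walk_congr A j (fun i hi => h i (by omega)), h j (by omega)]

lemma walk_neg (A : ℤ) (ε : ℕ → Bool) :
    ∀ j : ℕ, walk (-A) (fun i => !(ε i)) j = -walk A ε j
  | 0 => rfl
  | j + 1 => by
      rw [walk, walk, walk_neg A ε j]
      cases h : ε j <;> simp [h, stp] <;> ring

def wgt (L : ℕ) (s : ℕ → ℤ) : ℤ := ∑ k ∈ Finset.Icc 1 L, (k : ℤ) * |s (k + 1) - s (k - 1)|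

lemma wgt_congr (L : ℕ) {s s' : ℕ → ℤ} (h : ∀ j, j ≤ L + 1 → s j = s' j) :
    wgt L s = wgt L s' := by
  refine Finset.sum_congr rfl fun k hk => ?_
  rw [Finset.mem_Icc] at hk
  rw [h (k + 1) (by omega), h (k - 1) (by omega)]

lemma wgt_neg (L : ℕ) (s : ℕ → ℤ) : wgt L (fun j => -s j) = wgt L s := by
  refine Finset.sum_congr rfl fun k _ => ?_
  rw [show -s (k + 1) - -s (k - 1) = -(s (k + 1) - s (k - 1)) by ring, abs_neg]

noncomputable def ESf (L : ℕ) (A B : ℤ) (ε : Fin (L + 1) → Bool) : RatFunc ℚ :=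
  if walk A (exb ε) L = B ∧ walk A (exb ε) (L + 1) = B + 1
  then XR ^ wgt L (walk A (exb ε)) else 0

noncomputable def ES (L : ℕ) (A B : ℤ) : RatFunc ℚ := ∑ ε : Fin (L + 1) → Bool, ESf L A B ε

lemma sum_snoc {M : Type*} [AddCommMonoid M] {n : ℕ} (f : (Fin (n + 1) → Bool) → M) :
    ∑ ε : Fin (n + 1) → Bool, f ε
      = ∑ τ : Fin n → Bool, (f (Fin.snoc τ false) + f (Fin.snoc τ true)) := by
  rw [← Fintype.sum_equiv (Fin.snocEquiv (fun _ => Bool))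
    (fun p => f (Fin.snoc p.2 p.1)) f (fun p => rfl)]
  rw [Fintype.sum_prod_type, Fintype.sum_bool, ← Finset.sum_add_distrib]
  exact Finset.sum_congr rfl fun τ _ => add_comm _ _

lemma exb_snoc_lt {n : ℕ} (τ : Fin n → Bool) (b : Bool) (j : ℕ) (h : j < n) :
    exb (Fin.snoc τ b) j = exb τ j := by
  rw [exb, exb, dif_pos h, dif_pos (by omega : j < n + 1)]
  have : (⟨j, by omega⟩ : Fin (n + 1)) = Fin.castSucc ⟨j, h⟩ := rfl
  rw [this, Fin.snoc_castSucc]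

lemma exb_snoc_last {n : ℕ} (τ : Fin n → Bool) (b : Bool) :
    exb (Fin.snoc τ b) n = b := by
  rw [exb, dif_pos (by omega : n < n + 1)]
  have : (⟨n, by omega⟩ : Fin (n + 1)) = Fin.last n := rfl
  rw [this, Fin.snoc_last]

lemma walk_snoc {n : ℕ} (A : ℤ) (τ : Fin n → Bool) (b : Bool) (j : ℕ) (h : j ≤ n) :
    walk A (exb (Fin.snoc τ b)) j = walk A (exb τ) j :=
  walk_congr A j fun i hi => exb_snoc_lt τ b i (by omega)

lemma walk_exb_neg {n : ℕ} (A : ℤ) (τ : Fin n → Bool) (j : ℕ) (h : j ≤ n) :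
    walk (-A) (exb fun i => !(τ i)) j = -walk A (exb τ) j := by
  have h1 : walk (-A) (exb fun i => !(τ i)) j = walk (-A) (fun i => !(exb τ i)) j := by
    apply walk_congr
    intro i hi
    show exb (fun i => !(τ i)) i = !(exb τ i)
    rw [exb, exb, dif_pos (by omega : i < n), dif_pos (by omega : i < n)]
  rw [h1, walk_neg]

lemma ES_zero (A B : ℤ) : ES 0 A B = if A = B then 1 else 0 := by
  rw [ES, sum_snoc]
  have key : ∀ τ : Fin 0 → Bool,
      ESf 0 A B (Fin.snoc τ false) + ESf 0 A B (Fin.snoc τ true)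
        = (if A = B then 1 else 0) := by
    intro τ
    have h0 : ∀ b : Bool, walk A (exb (Fin.snoc τ b)) 0 = A := fun _ => rfl
    have h1 : ∀ b : Bool, walk A (exb (Fin.snoc τ b)) (0 + 1) = A + stp b := by
      intro b
      rw [walk, walk, exb_snoc_last]
    have hw : ∀ b : Bool, wgt 0 (walk A (exb (Fin.snoc τ b))) = 0 := by
      intro b
      rw [wgt, show Finset.Icc 1 0 = ∅ from Finset.Icc_eq_empty (by omega), Finset.sum_empty]
    rw [ESf, ESf, h0, h0, h1, h1, hw, hw]
    by_cases hAB : A = B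
    · rw [if_neg (by simp [stp]; omega), if_pos ⟨hAB, by simp [stp]; omega⟩]
      simp [hAB]
    · rw [if_neg (by tauto), if_neg (by tauto)]
      simp [hAB]
  rw [Finset.sum_congr rfl (fun τ _ => key τ), Finset.sum_const]
  simp

lemma stp_true : stp true = 1 := rfl
lemma stp_false : stp false = -1 := rfl

lemma ESf_neg (L : ℕ) (A B : ℤ) (τ : Fin (L + 1) → Bool) :
    ESf L (-A) (-(B + 1)) (fun i => !(τ i))
      = if walk A (exb τ) L = B + 1 ∧ walk A (exb τ) (L + 1) = B
        then XR ^ wgt L (walk A (exb τ)) else 0 := by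
  rw [ESf]
  have hL : walk (-A) (exb fun i => !(τ i)) L = -walk A (exb τ) L :=
    walk_exb_neg A τ L (by omega)
  have hL1 : walk (-A) (exb fun i => !(τ i)) (L + 1) = -walk A (exb τ) (L + 1) :=
    walk_exb_neg A τ (L + 1) (by omega)
  have hwg : wgt L (walk (-A) (exb fun i => !(τ i))) = wgt L (walk A (exb τ)) := by
    rw [wgt_congr L (s' := fun j => -walk A (exb τ) j) (fun j hj => walk_exb_neg A τ j hj),
      wgt_neg]
  rw [hL, hL1, hwg]
  refine if_congr ?_ rfl rfl
  constructor
  · rintro ⟨p, q⟩; constructor <;> omega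
  · rintro ⟨p, q⟩; constructor <;> omega

lemma ES_rec (L : ℕ) (A B : ℤ) :
    ES (L + 1) A B
      = XR ^ (2 * ((L : ℤ) + 1)) * ES L A (B - 1) + ES L (-A) (-(B + 1)) := by
  have hrefl : ES L (-A) (-(B + 1))
      = ∑ τ : Fin (L + 1) → Bool, ESf L (-A) (-(B + 1)) (fun i => !(τ i)) := by
    rw [ES]
    exact (Fintype.sum_bijective (fun (τ : Fin (L + 1) → Bool) (i : Fin (L + 1)) => !(τ i))
      (Function.Involutive.bijective (fun τ => by funext i; simp)) _ _ (fun τ => rfl)).symm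
  rw [ES, sum_snoc, hrefl, ES, Finset.mul_sum, ← Finset.sum_add_distrib]
  refine Finset.sum_congr rfl fun τ _ => ?_
  set w := walk A (exb τ) with hwdef
  have hsn : ∀ b : Bool, ESf (L + 1) A B (Fin.snoc τ b)
      = if w (L + 1) = B ∧ w (L + 1) + stp b = B + 1
        then XR ^ (wgt L w + ((L : ℤ) + 1) * |w (L + 1) + stp b - w L|) else 0 := by
    intro b
    rw [ESf]
    have e1 : walk A (exb (Fin.snoc τ b)) (L + 1) = w (L + 1) := walk_snoc A τ b (L + 1) le_rfl
    have e2 : walk A (exb (Fin.snoc τ b)) (L + 1 + 1) = w (L + 1) + stp b := by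
      rw [walk, e1, exb_snoc_last]
    have e3 : wgt (L + 1) (walk A (exb (Fin.snoc τ b)))
        = wgt L w + ((L : ℤ) + 1) * |w (L + 1) + stp b - w L| := by
      rw [wgt, Finset.sum_Icc_succ_top (by omega : 1 ≤ L + 1)]
      have r1 : ∑ k ∈ Finset.Icc 1 L, (k : ℤ) *
          |walk A (exb (Fin.snoc τ b)) (k + 1) - walk A (exb (Fin.snoc τ b)) (k - 1)|
            = wgt L w := by
        rw [← wgt]
        exact wgt_congr L (fun j hj => walk_snoc A τ b j (by omega))
      rw [r1, e2, show L + 1 - 1 = L from rfl, walk_snoc A τ b L (by omega)]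
      push_cast
      ring
    rw [e1, e2, e3]
  have hstep : w (L + 1) - w L = stp (τ (Fin.last L)) := by
    have h1 : w (L + 1) = w L + stp (exb τ L) := rfl
    have h2 : exb τ L = τ (Fin.last L) := by
      rw [exb, dif_pos (by omega : L < L + 1)]
      rfl
    rw [h1, h2]; ring
  have habs : w (L + 1) - w L = 1 ∨ w (L + 1) - w L = -1 := by
    rcases Bool.dichotomy (τ (Fin.last L)) with h | h <;> rw [hstep, h]
    · right; rfl
    · left; rfl
  rw [hsn, hsn, ESf, ESf_neg, ← hwdef]
  by_cases hB : w (L + 1) = B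
  · rw [if_neg (by rw [stp_false]; rintro ⟨p, q⟩; omega)]
    rcases habs with hL1 | hL1
    · -- w L = B - 1
      rw [if_pos ⟨hB, by rw [stp_true]; omega⟩]
      rw [if_pos ⟨by omega, by omega⟩]
      rw [if_neg (by rintro ⟨p, q⟩; omega)]
      rw [show w (L + 1) + stp true - w L = 2 by rw [stp_true]; omega]
      rw [show |(2 : ℤ)| = 2 by norm_num]
      rw [show wgt L w + ((L : ℤ) + 1) * 2 = 2 * ((L : ℤ) + 1) + wgt L w by ring]
      rw [zpow_add₀ XR_ne_zero]
      ring
    · -- w L = B + 1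
      rw [if_pos ⟨hB, by rw [stp_true]; omega⟩]
      rw [if_neg (by rintro ⟨p, q⟩; omega)]
      rw [if_pos ⟨by omega, hB⟩]
      rw [show w (L + 1) + stp true - w L = 0 by rw [stp_true]; omega]
      rw [show |(0 : ℤ)| = 0 by norm_num]
      rw [show wgt L w + ((L : ℤ) + 1) * 0 = wgt L w by ring]
      ring
  · rw [if_neg (by rintro ⟨p, q⟩; omega), if_neg (by rintro ⟨p, q⟩; omega),
      if_neg (by rintro ⟨p, q⟩; omega), if_neg (by rintro ⟨p, q⟩; omega)]
    ring

lemma gauss_zero_nat (n : ℕ) : gauss XR (n : ℤ) (0 : ℤ) = 1 := by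
  rw [show (0 : ℤ) = ((0 : ℕ) : ℤ) from rfl, gauss_nat n 0 (by omega), qp_zero, one_mul,
    Nat.sub_zero, div_self (qp_XR_ne n)]

lemma ES_eq (L : ℕ) (A B : ℤ) (h : ((L : ℤ) - (A - B)) % 2 = 0) :
    ES L A B
      = XR ^ ((A - B) * (A - B - 1)) * gauss RatFunc.X (L : ℤ) (((L : ℤ) + A - B) / 2) := by
  induction L generalizing A B with
  | zero =>
    rw [ES_zero]
    by_cases hAB : A = B
    · subst hAB
      rw [if_pos rfl, show ((0 : ℕ) : ℤ) + A - A = 0 by ring, show A - A = 0 by ring]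
      norm_num
      have h00 := gauss_zero_nat 0
      norm_num at h00
      rw [h00]
    · rw [if_neg hAB, gauss_neg' (by push_cast at h ⊢; omega)]
      ring
  | succ L ih =>
    have h1 : ((L : ℤ) - (A - (B - 1))) % 2 = 0 := by push_cast at h ⊢; omega
    have h2 : ((L : ℤ) - (-A - -(B + 1))) % 2 = 0 := by push_cast at h ⊢; omega
    rw [ES_rec, ih A (B - 1) h1, ih (-A) (-(B + 1)) h2]
    set d := A - B with hd
    obtain ⟨m, hm⟩ : ∃ m : ℤ, (L : ℤ) + 1 + d = 2 * m := ⟨((L : ℤ) + 1 + d) / 2, by omega⟩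
    have i1 : ((L : ℤ) + A - (B - 1)) / 2 = m := by omega
    have i2 : ((L : ℤ) + -A - -(B + 1)) / 2 = m - d := by omega
    have i3 : (((L + 1 : ℕ) : ℤ) + A - B) / 2 = m := by push_cast; omega
    rw [i1, i2, i3]
    have e1 : A - (B - 1) = d + 1 := by rw [hd]; ring
    have e2 : -A - -(B + 1) = 1 - d := by rw [hd]; ring
    rw [e1, e2]
    have hsym : gauss (RatFunc.X : RatFunc ℚ) (L : ℤ) (m - d) = gauss (RatFunc.X : RatFunc ℚ) (L : ℤ) (m - 1) := by
      rw [gauss_symm]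
      congr 1
      omega
    rw [hsym]
    have hp : gauss (RatFunc.X : RatFunc ℚ) ((L + 1 : ℕ) : ℤ) m
        = XR ^ (4 * m) * gauss (RatFunc.X : RatFunc ℚ) (L : ℤ) m
          + gauss (RatFunc.X : RatFunc ℚ) (L : ℤ) (m - 1) := by
      rw [show ((L + 1 : ℕ) : ℤ) = (L : ℤ) + 1 by push_cast; ring]
      exact gauss_pascal L m
    rw [hp, mul_add ((RatFunc.X : RatFunc ℚ) ^ (d * (d - 1))), ← mul_assoc, ← mul_assoc,
      ← zpow_add₀ XR_ne_zero, ← zpow_add₀ XR_ne_zero]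
    congr 1
    · congr 2
      linear_combination 2 * hm
    · congr 2
      ring

lemma glue (L : ℕ) (A B : ℤ) :
    (∑ᶠ σ : Fin (L + 2) → ℤ,
      (fun s : ℕ → ℤ =>
        if (∀ j, j ≤ L → |s (j + 1) - s j| = 1) ∧
            s 0 = A ∧ s L = B ∧ s (L + 1) = B + 1
        then (RatFunc.X : RatFunc ℚ) ^ (∑ k ∈ Finset.Icc 1 L, (k : ℤ) * |s (k + 1) - s (k - 1)|)
        else 0)
      (fun j => if h : j < L + 2 then σ ⟨j, h⟩ else 0))
      = ES L A B := by
  set g : (Fin (L + 2) → ℤ) → RatFunc ℚ := fun σ =>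
    (fun s : ℕ → ℤ =>
      if (∀ j, j ≤ L → |s (j + 1) - s j| = 1) ∧
          s 0 = A ∧ s L = B ∧ s (L + 1) = B + 1
      then (RatFunc.X : RatFunc ℚ) ^ (∑ k ∈ Finset.Icc 1 L, (k : ℤ) * |s (k + 1) - s (k - 1)|)
      else 0)
    (fun j => if h : j < L + 2 then σ ⟨j, h⟩ else 0) with hg
  set Φ : (Fin (L + 1) → Bool) → (Fin (L + 2) → ℤ) :=
    fun ε j => walk A (exb ε) (j : ℕ) with hΦ
  have hinj : Function.Injective Φ := by
    intro ε1 ε2 hE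
    funext i
    have h1 : ∀ j : ℕ, j < L + 2 → walk A (exb ε1) j = walk A (exb ε2) j := by
      intro j hj
      exact congrFun hE ⟨j, hj⟩
    have hi : (i : ℕ) < L + 1 := i.isLt
    have e1 := h1 ((i : ℕ) + 1) (by omega)
    have e2 := h1 (i : ℕ) (by omega)
    have t1 : walk A (exb ε1) ((i : ℕ) + 1) = walk A (exb ε1) (i : ℕ) + stp (exb ε1 i) := rfl
    have t2 : walk A (exb ε2) ((i : ℕ) + 1) = walk A (exb ε2) (i : ℕ) + stp (exb ε2 i) := rfl
    have s1 : stp (exb ε1 i) = stp (exb ε2 i) := by omega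
    have s2 : exb ε1 i = exb ε2 i := by
      rcases Bool.dichotomy (exb ε1 (i : ℕ)) with u | u <;>
        rcases Bool.dichotomy (exb ε2 (i : ℕ)) with v | v <;>
          simp [u, v, stp] at s1 ⊢
    rw [exb, exb, dif_pos hi, dif_pos hi] at s2
    simpa using s2
  have hsupp : ∀ σ, g σ ≠ 0 → σ ∈ Set.range Φ := by
    intro σ hσ
    set s : ℕ → ℤ := fun j => if h : j < L + 2 then σ ⟨j, h⟩ else 0 with hs
    have hgσ : g σ = if (∀ j, j ≤ L → |s (j + 1) - s j| = 1) ∧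
        s 0 = A ∧ s L = B ∧ s (L + 1) = B + 1
        then (RatFunc.X : RatFunc ℚ) ^ (∑ k ∈ Finset.Icc 1 L, (k : ℤ) * |s (k + 1) - s (k - 1)|)
        else 0 := rfl
    have hcond : (∀ j, j ≤ L → |s (j + 1) - s j| = 1) ∧
        s 0 = A ∧ s L = B ∧ s (L + 1) = B + 1 := by
      by_contra hc
      exact hσ (hgσ.trans (if_neg hc))
    obtain ⟨hstep, h0, hLB, hL1⟩ := hcond
    set ε : Fin (L + 1) → Bool :=
      fun i => if s ((i : ℕ) + 1) - s (i : ℕ) = 1 then true else false with hε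
    have hws : ∀ j, j ≤ L + 1 → walk A (exb ε) j = s j := by
      intro j
      induction j with
      | zero => intro _; exact h0.symm
      | succ n ihn =>
        intro hn
        have hn1 : n < L + 1 := by omega
        rw [walk, ihn (by omega)]
        have hx : exb ε n = (if s (n + 1) - s n = 1 then true else false) := by
          rw [exb, dif_pos hn1]
        rw [hx]
        have habs := hstep n (by omega)
        rcases (abs_eq (by norm_num : (0 : ℤ) ≤ 1)).mp habs with hh | hh
        · rw [if_pos hh, stp_true]; omega
        · rw [if_neg (by omega), stp_false]; omega
    refine ⟨ε, ?_⟩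
    funext j
    have : s (j : ℕ) = σ j := by
      rw [hs]
      simp only [dif_pos j.isLt]
    rw [hΦ]
    show walk A (exb ε) (j : ℕ) = σ j
    rw [hws (j : ℕ) (by omega), this]
  have hterm : ∀ ε, g (Φ ε) = ESf L A B ε := by
    intro ε
    set s : ℕ → ℤ := fun j => if h : j < L + 2 then Φ ε ⟨j, h⟩ else 0 with hs
    have hgσ : g (Φ ε) = if (∀ j, j ≤ L → |s (j + 1) - s j| = 1) ∧
        s 0 = A ∧ s L = B ∧ s (L + 1) = B + 1
        then (RatFunc.X : RatFunc ℚ) ^ (∑ k ∈ Finset.Icc 1 L, (k : ℤ) * |s (k + 1) - s (k - 1)|)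
        else 0 := rfl
    have hsw : ∀ j, j ≤ L + 1 → s j = walk A (exb ε) j := by
      intro j hj
      rw [hs]
      simp only [dif_pos (show j < L + 2 by omega)]
      rfl
    have hc1 : ∀ j, j ≤ L → |s (j + 1) - s j| = 1 := by
      intro j hj
      rw [hsw (j + 1) (by omega), hsw j (by omega)]
      show |walk A (exb ε) j + stp (exb ε j) - walk A (exb ε) j| = 1
      rw [add_sub_cancel_left]
      exact abs_stp _
    have hc0 : s 0 = A := hsw 0 (by omega)
    rw [hgσ, ESf, wgt]
    refine if_congr ?_ (congrArg (fun e : ℤ => (RatFunc.X : RatFunc ℚ) ^ e) ?_) rfl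
    · constructor
      · rintro ⟨-, -, p, q⟩
        exact ⟨by rw [← hsw L (by omega)]; exact p, by rw [← hsw (L + 1) (by omega)]; exact q⟩
      · rintro ⟨p, q⟩
        exact ⟨hc1, hc0, by rw [hsw L (by omega)]; exact p,
          by rw [hsw (L + 1) (by omega)]; exact q⟩
    · refine Finset.sum_congr rfl fun k hk => ?_
      rw [Finset.mem_Icc] at hk
      rw [hsw (k + 1) (by omega), hsw (k - 1) (by omega)]
  calc ∑ᶠ σ, g σ = ∑ᶠ σ ∈ Set.univ, g σ := (finsum_mem_univ g).symm
    _ = ∑ᶠ σ ∈ Set.range Φ, g σ := by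
        refine finsum_mem_inter_support_eq' g _ _ fun x hx => ?_
        simp only [Set.mem_univ, true_iff]
        exact hsupp x hx
    _ = ∑ᶠ ε, g (Φ ε) := finsum_mem_range hinj
    _ = ∑ ε, g (Φ ε) := finsum_eq_sum_of_fintype _
    _ = ∑ ε, ESf L A B ε := Finset.sum_congr rfl fun ε _ => hterm ε
    _ = ES L A B := rfl

end UPaths

/-- **Generating function of unrestricted lattice paths**: the paths run from
`σ_0 = a-1` through `σ_L = b-1`, `σ_{L+1} = b` with steps `±1` and unbounded
integer heights; stated in the variable `t = q^{1/4}` (exponents multiplied by `4`). -/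
theorem unrestricted_paths (a b L : ℕ) (ha : 1 ≤ a) (hb : 1 ≤ b)
    (hL : ((L : ℤ) - ((a : ℤ) - b)) % 2 = 0) :
    (∑ᶠ σ : Fin (L + 2) → ℤ,
      (fun s : ℕ → ℤ =>
        if (∀ j, j ≤ L → |s (j + 1) - s j| = 1) ∧
            s 0 = (a : ℤ) - 1 ∧ s L = (b : ℤ) - 1 ∧ s (L + 1) = (b : ℤ)
        then (RatFunc.X : RatFunc ℚ) ^ (∑ k ∈ Finset.Icc 1 L, (k : ℤ) * |s (k + 1) - s (k - 1)|)
        else 0)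
      (fun j => if h : j < L + 2 then σ ⟨j, h⟩ else 0))
      = (RatFunc.X : RatFunc ℚ) ^ (((a : ℤ) - b) * ((a : ℤ) - b - 1))
          * gauss RatFunc.X (L : ℤ) (((L : ℤ) + a - b) / 2) := by
  have hbody : ∀ σ : Fin (L + 2) → ℤ,
      (fun s : ℕ → ℤ =>
        if (∀ j, j ≤ L → |s (j + 1) - s j| = 1) ∧
            s 0 = (a : ℤ) - 1 ∧ s L = (b : ℤ) - 1 ∧ s (L + 1) = (b : ℤ)
        then (RatFunc.X : RatFunc ℚ) ^ (∑ k ∈ Finset.Icc 1 L, (k : ℤ) * |s (k + 1) - s (k - 1)|)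
        else 0)
      (fun j => if h : j < L + 2 then σ ⟨j, h⟩ else 0)
      = (fun s : ℕ → ℤ =>
        if (∀ j, j ≤ L → |s (j + 1) - s j| = 1) ∧
            s 0 = (a : ℤ) - 1 ∧ s L = (b : ℤ) - 1 ∧ s (L + 1) = ((b : ℤ) - 1) + 1
        then (RatFunc.X : RatFunc ℚ) ^ (∑ k ∈ Finset.Icc 1 L, (k : ℤ) * |s (k + 1) - s (k - 1)|)
        else 0)
      (fun j => if h : j < L + 2 then σ ⟨j, h⟩ else 0) := by
    intro σ
    refine if_congr ?_ rfl rfl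
    constructor
    · rintro ⟨p, q, r, t⟩; exact ⟨p, q, r, by omega⟩
    · rintro ⟨p, q, r, t⟩; exact ⟨p, q, r, by omega⟩
  rw [finsum_congr hbody, glue L ((a : ℤ) - 1) ((b : ℤ) - 1),
    ES_eq L ((a : ℤ) - 1) ((b : ℤ) - 1) (by omega),
    show ((a : ℤ) - 1) - ((b : ℤ) - 1) = (a : ℤ) - (b : ℤ) by ring,
    show (L : ℤ) + ((a : ℤ) - 1) - ((b : ℤ) - 1) = (L : ℤ) + (a : ℤ) - (b : ℤ) by ring]
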